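/- Assume Û^T O invertible. Define parameter errors Δ_x = ‖(Û^T O)^{-1} B̂_x (Û^T O) − A_x‖_1 (induced L1/max-column-sum norm), Δ = Σ_x Δ_x, and δ_1 = ‖(Û^T O)^{-1} b̂_1 − π‖_1. Then for any t ≥ 1, Σ_{x_1,…,x_t} ‖(Û^T O)^{-1}(B̂_{x_t}⋯B̂_{x_1} b̂_1 − B̃_{x_t}⋯B̃_{x_1} b̃_1)‖_1 ≤ (1+Δ)^t δ_1 + (1+Δ)^t − 1, where B̃_x = (Û^T O) A_x (Û^T O)^{-1} and b̃_1 = (Û^T O)π. -/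

import Mathlib

open Matrix

/-- Vector 1-norm. -/
def l1norm {m : ℕ} (v : Fin m → ℝ) : ℝ := ∑ i, |v i|

/-- Operator norm induced by the vector 1-norm (max column sum). -/
noncomputable def opL1 {m : ℕ} (M : Matrix (Fin m) (Fin m) ℝ) : ℝ :=
  ⨆ j : Fin m, ∑ i, |M i j|

lemma l1norm_nonneg {m : ℕ} (v : Fin m → ℝ) : 0 ≤ l1norm v :=
  Finset.sum_nonneg fun _ _ => abs_nonneg _

lemma l1norm_add_le {m : ℕ} (u v : Fin m → ℝ) : l1norm (u + v) ≤ l1norm u + l1norm v := by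
  rw [l1norm, l1norm, l1norm, ← Finset.sum_add_distrib]
  exact Finset.sum_le_sum fun i _ => abs_add_le _ _

lemma col_sum_le_opL1 {m : ℕ} (M : Matrix (Fin m) (Fin m) ℝ) (j : Fin m) :
    ∑ i, |M i j| ≤ opL1 M :=
  le_ciSup (f := fun j : Fin m => ∑ i, |M i j|) (Set.Finite.bddAbove (Set.finite_range _)) j

lemma opL1_nonneg {m : ℕ} (hm : 0 < m) (M : Matrix (Fin m) (Fin m) ℝ) : 0 ≤ opL1 M :=
  le_trans (Finset.sum_nonneg fun _ _ => abs_nonneg _) (col_sum_le_opL1 M ⟨0, hm⟩)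

lemma l1norm_mulVec_le {m : ℕ} (M : Matrix (Fin m) (Fin m) ℝ) (w : Fin m → ℝ) :
    l1norm (M.mulVec w) ≤ opL1 M * l1norm w := by
  calc l1norm (M.mulVec w) = ∑ i, |∑ j, M i j * w j| := rfl
    _ ≤ ∑ i, ∑ j, |M i j| * |w j| := by
        refine Finset.sum_le_sum fun i _ => ?_
        refine le_trans (Finset.abs_sum_le_sum_abs _ _) ?_
        exact le_of_eq (Finset.sum_congr rfl fun j _ => abs_mul _ _)
    _ = ∑ j, (∑ i, |M i j|) * |w j| := by
        rw [Finset.sum_comm]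
        exact Finset.sum_congr rfl fun j _ => (Finset.sum_mul ..).symm
    _ ≤ ∑ j, opL1 M * |w j| :=
        Finset.sum_le_sum fun j _ => mul_le_mul_of_nonneg_right (col_sum_le_opL1 M j) (abs_nonneg _)
    _ = opL1 M * l1norm w := (Finset.mul_sum ..).symm

lemma l1norm_mulVec_nonneg_le {m : ℕ} (M : Matrix (Fin m) (Fin m) ℝ)
    (hM : ∀ i j, 0 ≤ M i j) (w : Fin m → ℝ) :
    l1norm (M.mulVec w) ≤ ∑ j, (∑ i, M i j) * |w j| := by
  calc l1norm (M.mulVec w) = ∑ i, |∑ j, M i j * w j| := rfl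
    _ ≤ ∑ i, ∑ j, M i j * |w j| := by
        refine Finset.sum_le_sum fun i _ => ?_
        refine le_trans (Finset.abs_sum_le_sum_abs _ _) ?_
        refine le_of_eq (Finset.sum_congr rfl fun j _ => ?_)
        rw [abs_mul, abs_of_nonneg (hM i j)]
    _ = ∑ j, (∑ i, M i j) * |w j| := by
        rw [Finset.sum_comm]
        exact Finset.sum_congr rfl fun j _ => (Finset.sum_mul ..).symm

def snocEquiv (s k : ℕ) : ((Fin s → Fin k) × Fin k) ≃ (Fin (s + 1) → Fin k) where
  toFun p := Fin.snoc p.1 p.2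
  invFun f := (Fin.init f, f (Fin.last s))
  left_inv p := by simp
  right_inv f := by simp

lemma ofFn_snoc' {k s : ℕ} (f : Fin s → Fin k) (x : Fin k) :
    List.ofFn (Fin.snoc f x : Fin (s + 1) → Fin k) = List.ofFn f ++ [x] := by
  rw [List.ofFn_succ']
  simp [List.concat_eq_append]

lemma hmm_aux {m k : ℕ}
    (A C : Fin k → Matrix (Fin m) (Fin m) ℝ) (vh p : Fin m → ℝ)
    (Dx : Fin k → ℝ)
    (hDnn : ∀ y, 0 ≤ Dx y)
    (hAsum : ∀ w, ∑ y, l1norm ((A y).mulVec w) ≤ l1norm w)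
    (hCA : ∀ y w, l1norm ((C y - A y).mulVec w) ≤ Dx y * l1norm w)
    (hp : l1norm p ≤ 1) :
    ∀ s : ℕ,
      (∑ xs : Fin s → Fin k,
          l1norm ((List.ofFn xs).foldl (fun v y => (C y).mulVec v) vh
            - (List.ofFn xs).foldl (fun v y => (A y).mulVec v) p)
        ≤ (1 + ∑ y, Dx y) ^ s * l1norm (vh - p) + ((1 + ∑ y, Dx y) ^ s - 1))
      ∧ (∑ xs : Fin s → Fin k,
          l1norm ((List.ofFn xs).foldl (fun v y => (A y).mulVec v) p) ≤ 1) := by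
  have hΔnn : 0 ≤ ∑ y, Dx y := Finset.sum_nonneg fun y _ => hDnn y
  set Δ : ℝ := ∑ y, Dx y with hΔdef
  have hC : ∀ (y : Fin k) (w : Fin m → ℝ),
      l1norm ((C y).mulVec w) ≤ l1norm ((A y).mulVec w) + Dx y * l1norm w := by
    intro y w
    have e : (C y).mulVec w = (A y).mulVec w + ((C y - A y)).mulVec w := by
      rw [Matrix.sub_mulVec]; abel
    rw [e]
    exact le_trans (l1norm_add_le _ _) (add_le_add (le_refl _) (hCA y w))
  intro s
  induction s with
  | zero =>
      constructor
      · simp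
      · simpa using hp
  | succ s ih =>
      obtain ⟨ihD, ihN⟩ := ih
      have hsum : ∀ F : (Fin (s + 1) → Fin k) → ℝ,
          ∑ xs : Fin (s + 1) → Fin k, F xs
            = ∑ xs : Fin s → Fin k, ∑ x : Fin k, F (Fin.snoc xs x) := by
        intro F
        rw [← Equiv.sum_comp (snocEquiv s k) F, Fintype.sum_prod_type]
        rfl
      have hfold : ∀ (M : Fin k → Matrix (Fin m) (Fin m) ℝ) (v0 : Fin m → ℝ)
          (xs : Fin s → Fin k) (x : Fin k),
          (List.ofFn (Fin.snoc xs x : Fin (s + 1) → Fin k)).foldl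
              (fun v y => (M y).mulVec v) v0
            = (M x).mulVec ((List.ofFn xs).foldl (fun v y => (M y).mulVec v) v0) := by
        intro M v0 xs x
        rw [ofFn_snoc', List.foldl_append, List.foldl_cons, List.foldl_nil]
      constructor
      · rw [hsum]
        have hxs : ∀ xs : Fin s → Fin k,
            ∑ x : Fin k,
              l1norm ((List.ofFn (Fin.snoc xs x : Fin (s + 1) → Fin k)).foldl
                  (fun v y => (C y).mulVec v) vh
                - (List.ofFn (Fin.snoc xs x : Fin (s + 1) → Fin k)).foldl
                  (fun v y => (A y).mulVec v) p)
            ≤ (1 + Δ) * l1norm ((List.ofFn xs).foldl (fun v y => (C y).mulVec v) vh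
                  - (List.ofFn xs).foldl (fun v y => (A y).mulVec v) p)
              + Δ * l1norm ((List.ofFn xs).foldl (fun v y => (A y).mulVec v) p) := by
          intro xs
          set hl := (List.ofFn xs).foldl (fun v y => (C y).mulVec v) vh with hhl
          set gl := (List.ofFn xs).foldl (fun v y => (A y).mulVec v) p with hgl
          have hterm : ∀ x : Fin k,
              l1norm ((C x).mulVec hl - (A x).mulVec gl)
                ≤ l1norm ((A x).mulVec (hl - gl)) + Dx x * l1norm (hl - gl)
                    + Dx x * l1norm gl := by
            intro x
            have e : (C x).mulVec hl - (A x).mulVec gl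
                = (C x).mulVec (hl - gl) + ((C x - A x)).mulVec gl := by
              rw [Matrix.mulVec_sub, Matrix.sub_mulVec]; abel
            rw [e]
            calc l1norm ((C x).mulVec (hl - gl) + ((C x - A x)).mulVec gl)
                ≤ l1norm ((C x).mulVec (hl - gl)) + l1norm (((C x - A x)).mulVec gl) :=
                  l1norm_add_le _ _
              _ ≤ (l1norm ((A x).mulVec (hl - gl)) + Dx x * l1norm (hl - gl))
                    + Dx x * l1norm gl := add_le_add (hC x _) (hCA x _)
              _ = _ := by ring
          calc ∑ x : Fin k,
              l1norm ((List.ofFn (Fin.snoc xs x : Fin (s + 1) → Fin k)).foldl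
                  (fun v y => (C y).mulVec v) vh
                - (List.ofFn (Fin.snoc xs x : Fin (s + 1) → Fin k)).foldl
                  (fun v y => (A y).mulVec v) p)
              = ∑ x : Fin k, l1norm ((C x).mulVec hl - (A x).mulVec gl) := by
                refine Finset.sum_congr rfl fun x _ => ?_
                rw [hfold C vh xs x, hfold A p xs x]
            _ ≤ ∑ x : Fin k, (l1norm ((A x).mulVec (hl - gl)) + Dx x * l1norm (hl - gl)
                  + Dx x * l1norm gl) := Finset.sum_le_sum fun x _ => hterm x
            _ = (∑ x : Fin k, l1norm ((A x).mulVec (hl - gl)))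
                  + Δ * l1norm (hl - gl) + Δ * l1norm gl := by
                rw [Finset.sum_add_distrib, Finset.sum_add_distrib, ← Finset.sum_mul,
                  ← Finset.sum_mul]
            _ ≤ l1norm (hl - gl) + Δ * l1norm (hl - gl) + Δ * l1norm gl := by
                have := hAsum (hl - gl)
                linarith
            _ = (1 + Δ) * l1norm (hl - gl) + Δ * l1norm gl := by ring
        calc ∑ xs : Fin s → Fin k, ∑ x : Fin k,
              l1norm ((List.ofFn (Fin.snoc xs x : Fin (s + 1) → Fin k)).foldl
                  (fun v y => (C y).mulVec v) vh
                - (List.ofFn (Fin.snoc xs x : Fin (s + 1) → Fin k)).foldl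
                  (fun v y => (A y).mulVec v) p)
            ≤ ∑ xs : Fin s → Fin k,
                ((1 + Δ) * l1norm ((List.ofFn xs).foldl (fun v y => (C y).mulVec v) vh
                    - (List.ofFn xs).foldl (fun v y => (A y).mulVec v) p)
                  + Δ * l1norm ((List.ofFn xs).foldl (fun v y => (A y).mulVec v) p)) :=
              Finset.sum_le_sum fun xs _ => hxs xs
          _ = (1 + Δ) * (∑ xs : Fin s → Fin k,
                  l1norm ((List.ofFn xs).foldl (fun v y => (C y).mulVec v) vh
                    - (List.ofFn xs).foldl (fun v y => (A y).mulVec v) p))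
                + Δ * (∑ xs : Fin s → Fin k,
                  l1norm ((List.ofFn xs).foldl (fun v y => (A y).mulVec v) p)) := by
              rw [Finset.sum_add_distrib, Finset.mul_sum, Finset.mul_sum]
          _ ≤ (1 + Δ) * ((1 + Δ) ^ s * l1norm (vh - p) + ((1 + Δ) ^ s - 1)) + Δ * 1 := by
              refine add_le_add (mul_le_mul_of_nonneg_left ihD (by linarith))
                (mul_le_mul_of_nonneg_left ihN hΔnn)
          _ = (1 + Δ) ^ (s + 1) * l1norm (vh - p) + ((1 + Δ) ^ (s + 1) - 1) := by ring
      · rw [hsum]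
        calc ∑ xs : Fin s → Fin k, ∑ x : Fin k,
              l1norm ((List.ofFn (Fin.snoc xs x : Fin (s + 1) → Fin k)).foldl
                (fun v y => (A y).mulVec v) p)
            = ∑ xs : Fin s → Fin k, ∑ x : Fin k,
                l1norm ((A x).mulVec ((List.ofFn xs).foldl (fun v y => (A y).mulVec v) p)) := by
              refine Finset.sum_congr rfl fun xs _ => Finset.sum_congr rfl fun x _ => ?_
              rw [hfold A p xs x]
          _ ≤ ∑ xs : Fin s → Fin k,
                l1norm ((List.ofFn xs).foldl (fun v y => (A y).mulVec v) p) :=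
              Finset.sum_le_sum fun xs _ => hAsum _
          _ ≤ 1 := ihN

/-- error accumulation: with `Ûᵀ O` invertible, parameter errors
`Δ_x = ‖(Ûᵀ O)⁻¹ B̂_x (Ûᵀ O) − A_x‖₁`, `Δ = Σ_x Δ_x`, `δ₁ = ‖(Ûᵀ O)⁻¹ b̂₁ − π‖₁`, for any
`t ≥ 1`:
`Σ_{x_1,…,x_t} ‖(Ûᵀ O)⁻¹ (B̂_{x_t}⋯B̂_{x_1} b̂₁ − B̃_{x_t}⋯B̃_{x_1} b̃₁)‖₁
  ≤ (1+Δ)^t δ₁ + (1+Δ)^t − 1`,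
where `B̃_x = (Ûᵀ O) A_x (Ûᵀ O)⁻¹`, `b̃₁ = (Ûᵀ O) π`, and `A_x = T diag(O_{x,·})` are the
true HMM operators (`T`, `O` column-stochastic, `π` a probability vector). -/
theorem hmm_error_accumulation (m n t : ℕ) (hm : 0 < m) (ht : 1 ≤ t)
    (T : Matrix (Fin m) (Fin m) ℝ) (O : Matrix (Fin n) (Fin m) ℝ) (π : Fin m → ℝ)
    (hTnn : ∀ i j, 0 ≤ T i j) (hTcol : ∀ j, ∑ i, T i j = 1)
    (hOnn : ∀ x j, 0 ≤ O x j) (hOcol : ∀ j, ∑ x, O x j = 1)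
    (hπnn : ∀ i, 0 ≤ π i) (hπsum : ∑ i, π i = 1)
    (A : Fin n → Matrix (Fin m) (Fin m) ℝ)
    (hA : ∀ y, A y = T * Matrix.diagonal (fun i => O y i))
    (Uhat : Matrix (Fin n) (Fin m) ℝ) (hU : IsUnit (Uhatᵀ * O))
    (Bhat : Fin n → Matrix (Fin m) (Fin m) ℝ) (b1hat : Fin m → ℝ)
    (Btil : Fin n → Matrix (Fin m) (Fin m) ℝ)
    (hBtil : ∀ y, Btil y = (Uhatᵀ * O) * A y * (Uhatᵀ * O)⁻¹)
    (b1til : Fin m → ℝ) (hb1til : b1til = (Uhatᵀ * O).mulVec π)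
    (Δx : Fin n → ℝ)
    (hΔx : ∀ y, Δx y = opL1 ((Uhatᵀ * O)⁻¹ * Bhat y * (Uhatᵀ * O) - A y))
    (Δ : ℝ) (hΔ : Δ = ∑ y, Δx y)
    (δ₁ : ℝ) (hδ₁ : δ₁ = l1norm (((Uhatᵀ * O)⁻¹).mulVec b1hat - π)) :
    ∑ xs : Fin t → Fin n,
        l1norm (((Uhatᵀ * O)⁻¹).mulVec
          ((List.ofFn xs).foldl (fun v y => (Bhat y).mulVec v) b1hat
            - (List.ofFn xs).foldl (fun v y => (Btil y).mulVec v) b1til))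
      ≤ (1 + Δ) ^ t * δ₁ + (1 + Δ) ^ t - 1 := by
  set S := Uhatᵀ * O with hSdef
  have hdet : IsUnit S.det := (Matrix.isUnit_iff_isUnit_det S).mp hU
  have hinv : S⁻¹ * S = 1 := Matrix.nonsing_inv_mul S hdet
  have hinv2 : S * S⁻¹ = 1 := Matrix.mul_nonsing_inv S hdet
  set C : Fin n → Matrix (Fin m) (Fin m) ℝ := fun y => S⁻¹ * Bhat y * S with hCdef
  -- entries of A
  have hAentry : ∀ y i j, A y i j = T i j * O y j := by
    intro y i j; rw [hA, Matrix.mul_diagonal]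
  have hAnn : ∀ y i j, 0 ≤ A y i j := fun y i j => by
    rw [hAentry]; exact mul_nonneg (hTnn i j) (hOnn y j)
  -- Σ_y ‖A_y w‖₁ ≤ ‖w‖₁
  have hAsum : ∀ w : Fin m → ℝ, ∑ y, l1norm ((A y).mulVec w) ≤ l1norm w := by
    intro w
    calc ∑ y, l1norm ((A y).mulVec w)
        ≤ ∑ y, ∑ j, (∑ i, A y i j) * |w j| :=
          Finset.sum_le_sum fun y _ => l1norm_mulVec_nonneg_le (A y) (hAnn y) w
      _ = ∑ y, ∑ j, O y j * |w j| := by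
          refine Finset.sum_congr rfl fun y _ => Finset.sum_congr rfl fun j _ => ?_
          congr 1
          calc ∑ i, A y i j = ∑ i, T i j * O y j :=
                Finset.sum_congr rfl fun i _ => hAentry y i j
            _ = (∑ i, T i j) * O y j := (Finset.sum_mul ..).symm
            _ = O y j := by rw [hTcol j, one_mul]
      _ = ∑ j, (∑ y, O y j) * |w j| := by
          rw [Finset.sum_comm]
          exact Finset.sum_congr rfl fun j _ => (Finset.sum_mul ..).symm
      _ = l1norm w := by
          refine Finset.sum_congr rfl fun j _ => ?_
          rw [hOcol j, one_mul]
  have hCA : ∀ (y : Fin n) (w : Fin m → ℝ),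
      l1norm ((C y - A y).mulVec w) ≤ Δx y * l1norm w := by
    intro y w
    rw [hΔx y]
    exact l1norm_mulVec_le _ w
  have hDnn : ∀ y, 0 ≤ Δx y := fun y => by rw [hΔx y]; exact opL1_nonneg hm _
  have hp1 : l1norm π ≤ 1 := by
    rw [l1norm]
    rw [Finset.sum_congr rfl fun i _ => abs_of_nonneg (hπnn i), hπsum]
  -- pull S⁻¹ through the foldl of Bhat
  have pullB : ∀ (l : List (Fin n)) (v : Fin m → ℝ),
      S⁻¹.mulVec (l.foldl (fun v y => (Bhat y).mulVec v) v)
        = l.foldl (fun v y => (C y).mulVec v) (S⁻¹.mulVec v) := by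
    intro l
    induction l with
    | nil => intro v; rfl
    | cons a l ih =>
        intro v
        simp only [List.foldl_cons]
        rw [ih]
        congr 1
        rw [Matrix.mulVec_mulVec, Matrix.mulVec_mulVec, hCdef]
        congr 1
        rw [Matrix.mul_assoc (S⁻¹ * Bhat a) S S⁻¹, hinv2, Matrix.mul_one]
  -- pull S⁻¹ through the foldl of Btil
  have pullT : ∀ (l : List (Fin n)) (v : Fin m → ℝ),
      S⁻¹.mulVec (l.foldl (fun v y => (Btil y).mulVec v) v)
        = l.foldl (fun v y => (A y).mulVec v) (S⁻¹.mulVec v) := by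
    intro l
    induction l with
    | nil => intro v; rfl
    | cons a l ih =>
        intro v
        simp only [List.foldl_cons]
        rw [ih]
        congr 1
        rw [Matrix.mulVec_mulVec, Matrix.mulVec_mulVec, hBtil a]
        congr 1
        rw [← Matrix.mul_assoc, ← Matrix.mul_assoc, hinv, Matrix.one_mul]
  have hb1 : S⁻¹.mulVec b1til = π := by
    rw [hb1til, Matrix.mulVec_mulVec, hinv, Matrix.one_mulVec]
  have key := (hmm_aux A C (S⁻¹.mulVec b1hat) π Δx hDnn hAsum hCA hp1 t).1
  have hrw : ∀ xs : Fin t → Fin n,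
      l1norm (S⁻¹.mulVec
          ((List.ofFn xs).foldl (fun v y => (Bhat y).mulVec v) b1hat
            - (List.ofFn xs).foldl (fun v y => (Btil y).mulVec v) b1til))
        = l1norm ((List.ofFn xs).foldl (fun v y => (C y).mulVec v) (S⁻¹.mulVec b1hat)
            - (List.ofFn xs).foldl (fun v y => (A y).mulVec v) π) := by
    intro xs
    rw [Matrix.mulVec_sub, pullB, pullT, hb1]
  rw [Finset.sum_congr rfl fun xs _ => hrw xs]
  rw [hΔ, hδ₁]
  linarith [key]
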